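/- For every integer k ≥ 2, the hypergraph H obtained from the complete graph on vertices v_1,…,v_k by adding, for each pair {v_i,v_j} with i < j, a new vertex u_{ij} and taking as edges the sets {v_i, v_j, u_{ij}}, has weak degeneracy at most 1 and strong degeneracy at least k − 1. In particular, the strong degeneracy of a hypergraph can be arbitrarily larger than its weak degeneracy. -/

import Mathlib

/-- The vertex set of the separating example: `k` clique vertices `v_1,…,v_k`
(`Sum.inl`) together with one new vertex `u_{ij}` for each pair `i < j`
(`Sum.inr`). -/
abbrev SepVert (k : ℕ) := Fin k ⊕ {p : Fin k × Fin k // p.1 < p.2}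

/-- The edges of the separating example: for each pair `i < j`, the edge
`{v_i, v_j, u_{ij}}` of size `3`. -/
def sepEdges (k : ℕ) : Finset (Finset (SepVert k)) :=
  Finset.univ.image (fun p : {p : Fin k × Fin k // p.1 < p.2} =>
    ({Sum.inl p.1.1, Sum.inl p.1.2, Sum.inr p} : Finset (SepVert k)))

set_option maxHeartbeats 1000000

open Finset

def sepEdge {k : ℕ} (p : {p : Fin k × Fin k // p.1 < p.2}) : Finset (SepVert k) :=
  {Sum.inl p.1.1, Sum.inl p.1.2, Sum.inr p}

lemma sepEdge_mem {k : ℕ} (p : {p : Fin k × Fin k // p.1 < p.2}) :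
    sepEdge p ∈ sepEdges k := mem_image.mpr ⟨p, mem_univ _, rfl⟩

lemma mem_sepEdges {k : ℕ} {e : Finset (SepVert k)} :
    e ∈ sepEdges k ↔ ∃ p, e = sepEdge p := by
  simp [sepEdges, sepEdge, eq_comm]

lemma inr_mem_sepEdge {k : ℕ} {p q : {p : Fin k × Fin k // p.1 < p.2}} :
    Sum.inr q ∈ sepEdge p ↔ q = p := by
  simp [sepEdge]

lemma inl_mem_sepEdge {k : ℕ} {a : Fin k} {p : {p : Fin k × Fin k // p.1 < p.2}} :
    Sum.inl a ∈ sepEdge p ↔ a = p.1.1 ∨ a = p.1.2 := by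
  simp [sepEdge]

def prT {k : ℕ} (hk : 2 ≤ k) (a b : Fin k) : {p : Fin k × Fin k // p.1 < p.2} :=
  if h : a < b then ⟨(a, b), h⟩ else if h' : b < a then ⟨(b, a), h'⟩
  else ⟨(⟨0, by omega⟩, ⟨1, by omega⟩), by simp [Fin.lt_def]⟩

lemma prT_spec {k : ℕ} (hk : 2 ≤ k) {a b : Fin k} (h : a ≠ b) :
    ((prT hk a b).1.1 = a ∧ (prT hk a b).1.2 = b) ∨
    ((prT hk a b).1.1 = b ∧ (prT hk a b).1.2 = a) := by
  rcases lt_or_gt_of_ne h with h1 | h1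
  · left; simp [prT, h1]
  · right; simp [prT, h1, not_lt_of_gt h1]


/-- For every `k ≥ 2`, the hypergraph obtained from the complete graph on `v_1,…,v_k`
by adding a new vertex `u_{ij}` inside each edge (so all hyperedges are
`{v_i, v_j, u_{ij}}` with `i < j`) has weak degeneracy at most `1`
(witnessed by some ordering, measuring degrees in induced subhypergraphs)
and strong degeneracy at least `k - 1` (for every ordering, some vertex has
degree at least `k - 1` in the trace on the vertices up to it). -/
theorem weak_one_strong_ge
    (k : ℕ) (hk : 2 ≤ k) :
    (∃ v : Fin (Fintype.card (SepVert k)) → SepVert k, Function.Bijective v ∧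
      ∀ i, ((sepEdges k).filter
          (fun e => e ⊆ (Finset.Iic i).image v ∧ v i ∈ e)).card ≤ 1) ∧
    (∀ v : Fin (Fintype.card (SepVert k)) → SepVert k, Function.Bijective v →
      ∃ i, k - 1 ≤
        ((((sepEdges k).filter
              (fun e => (e ∩ (Finset.Iic i).image v).Nonempty)).image
            (fun e => e ∩ (Finset.Iic i).image v)).filter
          (fun e => v i ∈ e)).card) := by
  constructor
  · -- weak degeneracy ≤ 1
    set m := Fintype.card {p : Fin k × Fin k // p.1 < p.2} with hm
    have hcard : Fintype.card (SepVert k) = k + m := by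
      simp [Fintype.card_sum, hm]
    let E : SepVert k ≃ Fin (k + m) :=
      (Equiv.sumCongr (Equiv.refl (Fin k)) (Fintype.equivFin _)).trans finSumFinEquiv
    let v : Fin (Fintype.card (SepVert k)) → SepVert k :=
      fun i => E.symm (finCongr hcard i)
    have hval : ∀ x : SepVert k, ((E x : Fin (k + m)) : ℕ) < k ↔ ∃ a, x = Sum.inl a := by
      rintro (a | p)
      · simp only [E, Equiv.trans_apply, Equiv.sumCongr_apply, Sum.map_inl, Equiv.refl_apply,
          finSumFinEquiv_apply_left]
        simp
      · simp only [E, Equiv.trans_apply, Equiv.sumCongr_apply, Sum.map_inr,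
          finSumFinEquiv_apply_right]
        simp [Fin.natAdd]
    have hv : ∀ j : Fin (Fintype.card (SepVert k)),
        ((j : ℕ) < k ↔ ∃ a, v j = Sum.inl a) := by
      intro j
      have : (E (v j) : ℕ) = (j : ℕ) := by simp [v]
      rw [← hval (v j), this]
    refine ⟨v, ?_, ?_⟩
    · exact (E.symm.bijective.comp (finCongr hcard).bijective)
    · intro i
      rcases hvi : v i with a | p
      · -- v i is a clique vertex: no edge is fully inside the prefix
        have hik : (i : ℕ) < k := (hv i).mpr ⟨a, hvi⟩
        have hempty : (sepEdges k).filter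
            (fun e => e ⊆ (Finset.Iic i).image v ∧ Sum.inl a ∈ e) = ∅ := by
          rw [Finset.eq_empty_iff_forall_notMem]
          intro e he
          rw [Finset.mem_filter] at he
          obtain ⟨he1, he2, _⟩ := he
          obtain ⟨p, rfl⟩ := mem_sepEdges.mp he1
          have hmem : Sum.inr p ∈ (Finset.Iic i).image v :=
            he2 (by simp [sepEdge])
          obtain ⟨j, hj, hjv⟩ := Finset.mem_image.mp hmem
          have hjk : (j : ℕ) < k :=
            lt_of_le_of_lt (Fin.le_def.mp (Finset.mem_Iic.mp hj)) hik
          obtain ⟨a', ha'⟩ := (hv j).mp hjk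
          rw [hjv] at ha'
          exact Sum.inr_ne_inl ha'
        rw [hempty]; simp
      · -- v i is a pair vertex: the only edge containing it is sepEdge p
        have hsub : (sepEdges k).filter
            (fun e => e ⊆ (Finset.Iic i).image v ∧ Sum.inr p ∈ e) ⊆ {sepEdge p} := by
          intro e he
          rw [Finset.mem_filter] at he
          obtain ⟨he1, _, he3⟩ := he
          obtain ⟨q, rfl⟩ := mem_sepEdges.mp he1
          have := inr_mem_sepEdge.mp he3
          simp [this]
        calc _ ≤ ({sepEdge p} : Finset _).card := Finset.card_le_card hsub
          _ = 1 := Finset.card_singleton _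
  · -- strong degeneracy ≥ k - 1
    intro v hv
    let eqv := Equiv.ofBijective v hv
    let g : SepVert k → Fin (Fintype.card (SepVert k)) := eqv.symm
    have hgv : ∀ x, v (g x) = x := fun x => eqv.apply_symm_apply x
    have hne : ((Finset.univ : Finset (Fin k)).image (fun a => g (Sum.inl a))).Nonempty := by
      refine Finset.Nonempty.image ?_ _
      exact Finset.univ_nonempty_iff.mpr (Fin.pos_iff_nonempty.mp (by omega))
    set i := Finset.max' _ hne with hi
    obtain ⟨a₀, _, ha₀⟩ := Finset.mem_image.mp (Finset.max'_mem _ hne)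
    have hvi : v i = Sum.inl a₀ := by rw [hi, ← ha₀]; exact hgv _
    set P := (Finset.Iic i).image v with hP
    have hinlP : ∀ b : Fin k, Sum.inl b ∈ P := by
      intro b
      have hle : g (Sum.inl b) ≤ i := by
        rw [hi]
        exact Finset.le_max' ((Finset.univ : Finset (Fin k)).image (fun a => g (Sum.inl a))) _ (Finset.mem_image.mpr ⟨b, Finset.mem_univ _, rfl⟩)
      exact Finset.mem_image.mpr ⟨g (Sum.inl b), Finset.mem_Iic.mpr hle, hgv _⟩
    refine ⟨i, ?_⟩
    have key := Finset.card_le_card_of_injOn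
      (f := fun b : Fin k => sepEdge (prT hk a₀ b) ∩ P)
      (s := Finset.univ.erase a₀)
      (t := ((((sepEdges k).filter
              (fun e => (e ∩ (Finset.Iic i).image v).Nonempty)).image
            (fun e => e ∩ (Finset.Iic i).image v)).filter
          (fun e => v i ∈ e)))
      ?_ ?_
    · calc k - 1 = (Finset.univ.erase a₀).card := by
            rw [Finset.card_erase_of_mem (Finset.mem_univ _), Finset.card_univ, Fintype.card_fin]
         _ ≤ _ := key
    · intro b hb
      have hba : b ≠ a₀ := Finset.ne_of_mem_erase hb
      have ha₀mem : Sum.inl a₀ ∈ sepEdge (prT hk a₀ b) := by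
        rcases prT_spec hk (Ne.symm hba) with ⟨h1, _⟩ | ⟨_, h2⟩
        · exact inl_mem_sepEdge.mpr (Or.inl h1.symm)
        · exact inl_mem_sepEdge.mpr (Or.inr h2.symm)
      rw [Finset.mem_coe, Finset.mem_filter]
      constructor
      · exact Finset.mem_image.mpr ⟨sepEdge (prT hk a₀ b),
          Finset.mem_filter.mpr ⟨sepEdge_mem _,
            ⟨Sum.inl a₀, Finset.mem_inter.mpr ⟨ha₀mem, hinlP a₀⟩⟩⟩, rfl⟩
      · rw [hvi]
        exact Finset.mem_inter.mpr ⟨ha₀mem, hinlP a₀⟩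
    · intro b hb b' hb' heq
      have hba : b ≠ a₀ := Finset.ne_of_mem_erase hb
      have hb'a : b' ≠ a₀ := Finset.ne_of_mem_erase hb'
      have hb'mem : Sum.inl b' ∈ sepEdge (prT hk a₀ b') ∩ P := by
        refine Finset.mem_inter.mpr ⟨?_, hinlP b'⟩
        rcases prT_spec hk (Ne.symm hb'a) with ⟨_, h2⟩ | ⟨h1, _⟩
        · exact inl_mem_sepEdge.mpr (Or.inr h2.symm)
        · exact inl_mem_sepEdge.mpr (Or.inl h1.symm)
      have heq' : sepEdge (prT hk a₀ b) ∩ P = sepEdge (prT hk a₀ b') ∩ P := heq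
      rw [← heq'] at hb'mem
      have hmem : Sum.inl b' ∈ sepEdge (prT hk a₀ b) :=
        (Finset.mem_inter.mp hb'mem).1
      have hcases : b' = a₀ ∨ b' = b := by
        rcases prT_spec hk (Ne.symm hba) with ⟨h1, h2⟩ | ⟨h1, h2⟩ <;>
          rcases inl_mem_sepEdge.mp hmem with h | h <;>
          rw [h] <;> simp [h1, h2]
      exact (hcases.resolve_left hb'a).symm
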